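/- If additionally x⁺ is drawn from p⁺ independent of the samples, then E[P̂] = ∫∫ h(x⁺, x⁻) p⁺(x⁺) p⁻(x⁻) dx⁺ dx⁻, i.e., the debiased estimator is an unbiased estimator of the AUC risk R_AUC = E_{x⁺∼p⁺, x⁻∼p⁻}[h(x⁺,x⁻)]. -/

import Mathlib

open MeasureTheory


lemma bdd_integrable {α : Type*} [MeasurableSpace α] (μ : Measure α) [IsFiniteMeasure μ]
    (f : α → ℝ) (hf : AEStronglyMeasurable f μ) (C : ℝ) (hC : ∀ z, |f z| ≤ C) :
    Integrable f μ :=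
  (integrable_const C).mono' hf (Filter.Eventually.of_forall fun z => by
    simpa [Real.norm_eq_abs] using hC z)

lemma pair_integral {X Ω : Type*} [MeasurableSpace X] [MeasurableSpace Ω]
    (ℙ : Measure Ω) [IsProbabilityMeasure ℙ]
    (h : X × X → ℝ) (hmeas : Measurable h) (C : ℝ) (hbdd : ∀ z, |h z| ≤ C)
    (f g : Ω → X) (hf : Measurable f) (hg : Measurable g)
    (hfg : ProbabilityTheory.IndepFun f g ℙ) :
    ∫ ω, h (f ω, g ω) ∂ℙ =
      ∫ x, ∫ y, h (x, y) ∂(Measure.map g ℙ) ∂(Measure.map f ℙ) := by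
  haveI : IsProbabilityMeasure (Measure.map f ℙ) := Measure.isProbabilityMeasure_map hf.aemeasurable
  haveI : IsProbabilityMeasure (Measure.map g ℙ) := Measure.isProbabilityMeasure_map hg.aemeasurable
  have hmap : Measure.map (fun ω => (f ω, g ω)) ℙ =
      (Measure.map f ℙ).prod (Measure.map g ℙ) :=
    (ProbabilityTheory.indepFun_iff_map_prod_eq_prod_map_map hf.aemeasurable hg.aemeasurable).mp hfg
  have hint : Integrable h ((Measure.map f ℙ).prod (Measure.map g ℙ)) :=
    bdd_integrable _ h hmeas.aestronglyMeasurable C hbdd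
  calc ∫ ω, h (f ω, g ω) ∂ℙ = ∫ z, h z ∂(Measure.map (fun ω => (f ω, g ω)) ℙ) := by
        rw [integral_map (hf.prodMk hg).aemeasurable hmeas.aestronglyMeasurable]
    _ = ∫ z, h z ∂((Measure.map f ℙ).prod (Measure.map g ℙ)) := by rw [hmap]
    _ = _ := integral_prod h hint


/-- If additionally `x⁺ ∼ p⁺` independently of all the samples, then the debiased
estimator `P̂` is an unbiased estimator of the AUC risk
`R_AUC = E_{x⁺∼p⁺, x⁻∼p⁻} h(x⁺, x⁻)`. -/
theorem debiased_estimator_unbiased_auc {X Ω : Type*} [MeasurableSpace X] [MeasurableSpace Ω]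
    (ℙ : Measure Ω) [IsProbabilityMeasure ℙ]
    (μp μm : Measure X) [IsProbabilityMeasure μp] [IsProbabilityMeasure μm]
    (τp τm : ℝ) (hτp : 0 ≤ τp) (hτm : 0 < τm) (hsum : τp + τm = 1)
    (μ : Measure X) (hμ : μ = ENNReal.ofReal τp • μp + ENNReal.ofReal τm • μm)
    (h : X × X → ℝ) (hmeas : Measurable h) (C : ℝ) (hbdd : ∀ z, |h z| ≤ C)
    (N M : ℕ) (hN : 0 < N) (hM : 0 < M)
    (Xplus : Ω → X) (Xs : Fin N → Ω → X) (Xs' : Fin M → Ω → X)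
    (hXpmeas : Measurable Xplus)
    (hXmeas : ∀ n, Measurable (Xs n)) (hX'meas : ∀ m, Measurable (Xs' m))
    (hXplaw : Measure.map Xplus ℙ = μp)
    (hXlaw : ∀ n, Measure.map (Xs n) ℙ = μ) (hX'law : ∀ m, Measure.map (Xs' m) ℙ = μp)
    (hindep : ProbabilityTheory.iIndepFun
      (fun k : Option (Fin N ⊕ Fin M) => Option.elim k Xplus (Sum.elim Xs Xs')) ℙ) :
    ∫ ω, ((1 / (N * τm)) * ∑ n, h (Xplus ω, Xs n ω) -
          (τp / (M * τm)) * ∑ m, h (Xplus ω, Xs' m ω)) ∂ℙ =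
      ∫ xp, ∫ xm, h (xp, xm) ∂μm ∂μp := by
  set A := ∫ xp, ∫ y, h (xp, y) ∂μp ∂μp with hA
  set B := ∫ xp, ∫ y, h (xp, y) ∂μm ∂μp with hB
  -- integrability on product spaces
  have hintpp : Integrable h (μp.prod μp) := bdd_integrable _ h hmeas.aestronglyMeasurable C hbdd
  have hintpm : Integrable h (μp.prod μm) := bdd_integrable _ h hmeas.aestronglyMeasurable C hbdd
  -- splitting the inner integral over μ
  have hsplit : ∀ xp : X, ∫ y, h (xp, y) ∂μ =
      τp * ∫ y, h (xp, y) ∂μp + τm * ∫ y, h (xp, y) ∂μm := by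
    intro xp
    have hmx : Measurable fun y => h (xp, y) := hmeas.comp measurable_prodMk_left
    have hip : Integrable (fun y => h (xp, y)) μp :=
      bdd_integrable _ _ hmx.aestronglyMeasurable C fun z => hbdd _
    have him : Integrable (fun y => h (xp, y)) μm :=
      bdd_integrable _ _ hmx.aestronglyMeasurable C fun z => hbdd _
    rw [hμ, integral_add_measure (hip.smul_measure ENNReal.ofReal_ne_top)
        (him.smul_measure ENNReal.ofReal_ne_top), integral_smul_measure,
      integral_smul_measure, ENNReal.toReal_ofReal hτp, ENNReal.toReal_ofReal hτm.le,
      smul_eq_mul, smul_eq_mul]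
  have houter : ∫ xp, ∫ y, h (xp, y) ∂μ ∂μp = τp * A + τm * B := by
    have h1 : Integrable (fun xp => ∫ y, h (xp, y) ∂μp) μp := hintpp.integral_prod_left
    have h2 : Integrable (fun xp => ∫ y, h (xp, y) ∂μm) μp := hintpm.integral_prod_left
    calc ∫ xp, ∫ y, h (xp, y) ∂μ ∂μp
        = ∫ xp, (τp * ∫ y, h (xp, y) ∂μp + τm * ∫ y, h (xp, y) ∂μm) ∂μp := by
          exact integral_congr_ae (Filter.Eventually.of_forall hsplit)
      _ = τp * A + τm * B := by
          rw [integral_add (h1.const_mul τp) (h2.const_mul τm), integral_const_mul,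
            integral_const_mul]
  -- per-term expectations
  have hIn : ∀ n, ∫ ω, h (Xplus ω, Xs n ω) ∂ℙ = τp * A + τm * B := by
    intro n
    have hind := hindep.indepFun
      (i := (none : Option (Fin N ⊕ Fin M))) (j := some (Sum.inl n)) (by simp)
    rw [pair_integral ℙ h hmeas C hbdd Xplus (Xs n) hXpmeas (hXmeas n) hind,
      hXplaw, hXlaw n, houter]
  have hIm : ∀ m, ∫ ω, h (Xplus ω, Xs' m ω) ∂ℙ = A := by
    intro m
    have hind := hindep.indepFun
      (i := (none : Option (Fin N ⊕ Fin M))) (j := some (Sum.inr m)) (by simp)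
    rw [pair_integral ℙ h hmeas C hbdd Xplus (Xs' m) hXpmeas (hX'meas m) hind,
      hXplaw, hX'law m]
  -- integrability of each sample term
  have hintn : ∀ n, Integrable (fun ω => h (Xplus ω, Xs n ω)) ℙ := fun n =>
    bdd_integrable _ _ (hmeas.comp (hXpmeas.prodMk (hXmeas n))).aestronglyMeasurable C
      fun z => hbdd _
  have hintm : ∀ m, Integrable (fun ω => h (Xplus ω, Xs' m ω)) ℙ := fun m =>
    bdd_integrable _ _ (hmeas.comp (hXpmeas.prodMk (hX'meas m))).aestronglyMeasurable C
      fun z => hbdd _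
  have hS1 : Integrable (fun ω => ∑ n, h (Xplus ω, Xs n ω)) ℙ :=
    integrable_finset_sum _ fun n _ => hintn n
  have hS2 : Integrable (fun ω => ∑ m, h (Xplus ω, Xs' m ω)) ℙ :=
    integrable_finset_sum _ fun m _ => hintm m
  rw [integral_sub ((hS1.const_mul _)) ((hS2.const_mul _)), integral_const_mul,
    integral_const_mul, integral_finset_sum _ fun n _ => hintn n,
    integral_finset_sum _ fun m _ => hintm m]
  simp only [hIn, hIm, Finset.sum_const, Finset.card_univ, Fintype.card_fin, nsmul_eq_mul]
  have hNne : (N : ℝ) ≠ 0 := Nat.cast_ne_zero.mpr hN.ne'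
  have hMne : (M : ℝ) ≠ 0 := Nat.cast_ne_zero.mpr hM.ne'
  field_simp
  ring
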